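/- In the root system of type $D_\ell$ ($\ell \ge 4$) with simple roots $\alpha_1,\ldots,\alpha_\ell$ in the standard labeling, let $\Theta = \Sigma\setminus\{\alpha_{\ell-1},\alpha_\ell\}$ and $\delta_P = \sum_{\gamma\in\Pi^+\setminus\langle\Theta\rangle^+}\gamma$. Then $\langle\delta_P, h_{\alpha_{\ell-1}}^\vee\rangle = \ell$ and $\langle\delta_P, h_{\alpha_\ell}^\vee\rangle = \ell$. -/

import Mathlib

open Finset
open scoped Classical

noncomputable section

/-- `i`-th standard basis vector of `ℚ^k`. -/
def E (k : ℕ) (i : Fin k) : Fin k → ℚ := fun j => if j = i then 1 else 0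

/-- The Euclidean inner product on `ℚ^k`. -/
def dot {k : ℕ} (v w : Fin k → ℚ) : ℚ := ∑ i, v i * w i

/-- The pairing `⟨β, h_γ^∨⟩ = 2(β,γ)/(γ,γ)` of `β` with the coroot of `γ`. -/
def pairing {k : ℕ} (β γ : Fin k → ℚ) : ℚ := 2 * dot β γ / dot γ γ

/-- The set `⟨Θ⟩⁺` of positive roots that are integral combinations of elements of `Θ`. -/
def spanPos {k : ℕ} (pos Θ : Finset (Fin k → ℚ)) : Finset (Fin k → ℚ) :=
  pos.filter fun γ => ∃ c : (Fin k → ℚ) → ℤ, γ = ∑ θ ∈ Θ, (c θ : ℚ) • θ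

/-- `δ_P`, the sum of the positive roots not lying in the integral span of `Θ`. -/
def deltaP {k : ℕ} (pos Θ : Finset (Fin k → ℚ)) : Fin k → ℚ :=
  ∑ γ ∈ pos \ spanPos pos Θ, γ

/-- Positive roots of type `D_ℓ`: `e_i ± e_j` (`i < j`). -/
def posD (ℓ : ℕ) : Finset (Fin ℓ → ℚ) :=
  (((univ : Finset (Fin ℓ × Fin ℓ)).filter fun p => p.1 < p.2).image
      fun p => E ℓ p.1 - E ℓ p.2) ∪
  (((univ : Finset (Fin ℓ × Fin ℓ)).filter fun p => p.1 < p.2).image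
      fun p => E ℓ p.1 + E ℓ p.2)

/-- Simple roots of type `D_ℓ`: `α_{i+1} = e_i - e_{i+1}` for `i + 1 < ℓ`, and the
fork root `α_ℓ = e_{ℓ-2} + e_{ℓ-1}`. -/
def simpleD (ℓ : ℕ) (i : Fin ℓ) : Fin ℓ → ℚ :=
  if h : i.val + 1 < ℓ then E ℓ i - E ℓ ⟨i.val + 1, h⟩
  else E ℓ ⟨ℓ - 2, by have := i.isLt; omega⟩ + E ℓ ⟨ℓ - 1, by have := i.isLt; omega⟩

lemma dot_E_right {k} (v : Fin k → ℚ) (j : Fin k) : dot v (E k j) = v j := by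
  simp [dot, E, mul_ite]

lemma dot_add_right {k} (v w u : Fin k → ℚ) : dot v (w + u) = dot v w + dot v u := by
  simp [dot, mul_add, Finset.sum_add_distrib]

lemma dot_sub_right {k} (v w u : Fin k → ℚ) : dot v (w - u) = dot v w - dot v u := by
  simp [dot, mul_sub, Finset.sum_sub_distrib]

lemma sumE {k} (i : Fin k) : ∑ t, E k i t = 1 := by simp [E]

lemma Esub_inj {k} {i j i' j' : Fin k} (hij : i < j) (hij' : i' < j')
    (h : E k i - E k j = E k i' - E k j') : i = i' ∧ j = j' := by
  have hne : i ≠ j := hij.ne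
  have h1 := congrFun h i
  have h2 := congrFun h j
  simp only [Pi.sub_apply, E] at h1 h2
  rw [if_true, if_neg hne] at h1
  rw [if_neg (Ne.symm hne), if_true] at h2
  have e1 : i = i' := by
    by_contra e
    rw [if_neg e] at h1
    rcases eq_or_ne i j' with e2 | e2
    · rw [if_pos e2] at h1; norm_num at h1
    · rw [if_neg e2] at h1; norm_num at h1
  subst e1
  refine ⟨rfl, ?_⟩
  by_contra e
  rw [if_neg (Ne.symm hne), if_neg e] at h2
  norm_num at h2

lemma Eadd_inj {k} {i j i' j' : Fin k} (hij : i < j) (hij' : i' < j')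
    (h : E k i + E k j = E k i' + E k j') : i = i' ∧ j = j' := by
  have hne : i ≠ j := hij.ne
  have hne' : i' ≠ j' := hij'.ne
  have h1 := congrFun h i
  simp only [Pi.add_apply, E] at h1
  rw [if_true, if_neg hne] at h1
  rcases eq_or_ne i i' with e1 | e1
  · subst e1
    rw [if_pos rfl] at h1
    have e2 : j = j' := by
      have h2 := congrFun h j
      simp only [Pi.add_apply, E] at h2
      rw [if_neg (Ne.symm hne), if_true] at h2
      by_contra e
      rw [if_neg e] at h2
      norm_num at h2
    exact ⟨rfl, e2⟩
  · exfalso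
    have e2 : i = j' := by
      by_contra e2
      rw [if_neg e1, if_neg e2] at h1
      norm_num at h1
    have h3 := congrFun h i'
    simp only [Pi.add_apply, E] at h3
    rw [if_neg (Ne.symm e1), if_true, if_neg hne'] at h3
    have e3 : i' = j := by
      by_contra e3
      rw [if_neg e3] at h3
      norm_num at h3
    subst e2
    subst e3
    exact absurd hij (lt_asymm hij')

lemma Esub_ne_add {k} (i j i' j' : Fin k) : E k i - E k j ≠ E k i' + E k j' := by
  intro h
  have h2 : ∑ t, (E k i - E k j) t = ∑ t, (E k i' + E k j') t := by rw [h]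
  simp only [Pi.sub_apply, Pi.add_apply, Finset.sum_sub_distrib, Finset.sum_add_distrib,
    sumE] at h2
  norm_num at h2

lemma sumA {k} (cond : Fin k × Fin k → Prop) [DecidablePred cond] (c : Fin k) :
    ∑ p ∈ univ.filter cond, (E k p.1) c = ∑ j : Fin k, if cond (c, j) then (1:ℚ) else 0 := by
  rw [Finset.sum_filter, Fintype.sum_prod_type]
  refine (Finset.sum_eq_single c (fun i _ hi => ?_) (by simp)).trans ?_
  · simp [E, Ne.symm hi]
  · simp [E]

lemma sumB {k} (cond : Fin k × Fin k → Prop) [DecidablePred cond] (c : Fin k) :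
    ∑ p ∈ univ.filter cond, (E k p.2) c = ∑ i : Fin k, if cond (i, c) then (1:ℚ) else 0 := by
  rw [Finset.sum_filter, Fintype.sum_prod_type]
  refine Finset.sum_congr rfl fun i _ => ?_
  refine (Finset.sum_eq_single c (fun j _ hj => by simp [E, Ne.symm hj]) (by simp)).trans
    (by simp [E])

lemma sum_ind (k : ℕ) (P : ℕ → Prop) [DecidablePred P] :
    (∑ m : Fin k, if P m.val then (1:ℚ) else 0) = ((range k).filter P).card := by
  rw [Fin.sum_univ_eq_sum_range (fun n => if P n then (1:ℚ) else 0) k, Finset.sum_boole]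

lemma Spos_apply (ℓ : ℕ) (c : Fin ℓ) :
    (∑ γ ∈ posD ℓ, γ) c = 2 * ∑ j : Fin ℓ, (if c < j then (1:ℚ) else 0) := by
  have hdisj : Disjoint
      (((univ : Finset (Fin ℓ × Fin ℓ)).filter fun p => p.1 < p.2).image
        fun p => E ℓ p.1 - E ℓ p.2)
      (((univ : Finset (Fin ℓ × Fin ℓ)).filter fun p => p.1 < p.2).image
        fun p => E ℓ p.1 + E ℓ p.2) := by
    rw [Finset.disjoint_left]
    rintro γ h1 h2
    simp only [Finset.mem_image] at h1 h2
    obtain ⟨p, _, rfl⟩ := h1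
    obtain ⟨q, _, he⟩ := h2
    exact Esub_ne_add p.1 p.2 q.1 q.2 he.symm
  have hi1 : ∀ x ∈ (univ : Finset (Fin ℓ × Fin ℓ)).filter fun p => p.1 < p.2,
      ∀ y ∈ (univ : Finset (Fin ℓ × Fin ℓ)).filter fun p => p.1 < p.2,
      E ℓ x.1 - E ℓ x.2 = E ℓ y.1 - E ℓ y.2 → x = y := by
    intro x hx y hy hxy
    simp only [Finset.mem_filter] at hx hy
    obtain ⟨h1, h2⟩ := Esub_inj hx.2 hy.2 hxy
    exact Prod.ext h1 h2
  have hi2 : ∀ x ∈ (univ : Finset (Fin ℓ × Fin ℓ)).filter fun p => p.1 < p.2,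
      ∀ y ∈ (univ : Finset (Fin ℓ × Fin ℓ)).filter fun p => p.1 < p.2,
      E ℓ x.1 + E ℓ x.2 = E ℓ y.1 + E ℓ y.2 → x = y := by
    intro x hx y hy hxy
    simp only [Finset.mem_filter] at hx hy
    obtain ⟨h1, h2⟩ := Eadd_inj hx.2 hy.2 hxy
    exact Prod.ext h1 h2
  rw [posD, Finset.sum_union hdisj, Finset.sum_image hi1, Finset.sum_image hi2]
  simp only [Pi.add_apply, Finset.sum_apply, Pi.sub_apply]
  rw [Finset.sum_sub_distrib, Finset.sum_add_distrib,
    sumA (fun p : Fin ℓ × Fin ℓ => p.1 < p.2) c, sumB (fun p : Fin ℓ × Fin ℓ => p.1 < p.2) c]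
  ring

lemma SQ_apply (ℓ : ℕ) (c : Fin ℓ) :
    (∑ γ ∈ ((univ : Finset (Fin ℓ × Fin ℓ)).filter
        fun p => p.1 < p.2 ∧ p.2.val + 1 < ℓ).image (fun p => E ℓ p.1 - E ℓ p.2), γ) c
      = (∑ j : Fin ℓ, if c < j ∧ j.val + 1 < ℓ then (1:ℚ) else 0)
        - (∑ i : Fin ℓ, if i < c ∧ c.val + 1 < ℓ then (1:ℚ) else 0) := by
  have hi1 : ∀ x ∈ (univ : Finset (Fin ℓ × Fin ℓ)).filter
        (fun p => p.1 < p.2 ∧ p.2.val + 1 < ℓ),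
      ∀ y ∈ (univ : Finset (Fin ℓ × Fin ℓ)).filter (fun p => p.1 < p.2 ∧ p.2.val + 1 < ℓ),
      E ℓ x.1 - E ℓ x.2 = E ℓ y.1 - E ℓ y.2 → x = y := by
    intro x hx y hy hxy
    simp only [Finset.mem_filter] at hx hy
    obtain ⟨h1, h2⟩ := Esub_inj hx.2.1 hy.2.1 hxy
    exact Prod.ext h1 h2
  rw [Finset.sum_image hi1]
  simp only [Finset.sum_apply, Pi.sub_apply]
  rw [Finset.sum_sub_distrib,
    sumA (fun p : Fin ℓ × Fin ℓ => p.1 < p.2 ∧ p.2.val + 1 < ℓ) c,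
    sumB (fun p : Fin ℓ × Fin ℓ => p.1 < p.2 ∧ p.2.val + 1 < ℓ) c]

lemma telescope (ℓ : ℕ) (g : ℕ → (Fin ℓ → ℚ)) (a b : ℕ) (hab : a ≤ b) :
    ∑ n ∈ Finset.Ico a b, (g n - g (n + 1)) = g a - g b := by
  rw [Finset.sum_Ico_eq_sub _ hab, Finset.sum_range_sub' g b, Finset.sum_range_sub' g a]
  abel

/-- `n`-th basis vector, defaulting to `0` out of range. -/
def gE (ℓ : ℕ) (n : ℕ) : Fin ℓ → ℚ := if h : n < ℓ then E ℓ ⟨n, h⟩ else 0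

lemma sum_step (ℓ : ℕ) (a b : ℕ) (ha : a < b) (hb : b + 1 < ℓ) :
    ∑ m ∈ (univ : Finset (Fin ℓ)).filter (fun i => i.val + 3 ≤ ℓ),
      (if a ≤ m.val ∧ m.val < b then gE ℓ m.val - gE ℓ (m.val + 1) else 0)
    = gE ℓ a - gE ℓ b := by
  rw [Finset.sum_filter]
  rw [Fin.sum_univ_eq_sum_range
    (fun n => if n + 3 ≤ ℓ then (if a ≤ n ∧ n < b then gE ℓ n - gE ℓ (n + 1) else 0) else 0) ℓ]
  rw [Finset.sum_congr rfl (fun n _ => ?_)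
    (f := fun n => if n + 3 ≤ ℓ then (if a ≤ n ∧ n < b then gE ℓ n - gE ℓ (n + 1) else 0) else 0)
    (g := fun n => if a ≤ n ∧ n < b then gE ℓ n - gE ℓ (n + 1) else 0)]
  · rw [← Finset.sum_filter]
    have he : (range ℓ).filter (fun n => a ≤ n ∧ n < b) = Finset.Ico a b := by
      ext n
      simp only [Finset.mem_filter, Finset.mem_range, Finset.mem_Ico]
      omega
    rw [he, telescope ℓ (gE ℓ) a b (le_of_lt ha)]
  · split_ifs with h1 h2 <;> first | rfl | (exfalso; omega)

lemma span_eq (ℓ : ℕ) (hl : 4 ≤ ℓ) :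
    spanPos (posD ℓ)
        (((univ : Finset (Fin ℓ)).filter fun i => i.val + 3 ≤ ℓ).image (simpleD ℓ))
      = ((univ : Finset (Fin ℓ × Fin ℓ)).filter fun p => p.1 < p.2 ∧ p.2.val + 1 < ℓ).image
          (fun p => E ℓ p.1 - E ℓ p.2) := by
  have hlast : ℓ - 1 < ℓ := by omega
  set last : Fin ℓ := ⟨ℓ - 1, hlast⟩ with hlastdef
  have hθ : ∀ m : Fin ℓ, m.val + 3 ≤ ℓ →
      (simpleD ℓ m) last = 0 ∧ (∑ t, (simpleD ℓ m) t) = 0 := by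
    intro m hm
    have hm1 : m.val + 1 < ℓ := by omega
    have h1 : last ≠ m := by simp only [Fin.ne_iff_vne, hlastdef]; omega
    have h2 : last ≠ (⟨m.val + 1, hm1⟩ : Fin ℓ) := by
      simp only [Fin.ne_iff_vne, hlastdef]; omega
    constructor
    · simp [simpleD, dif_pos hm1, E, h1, h2]
    · simp [simpleD, dif_pos hm1, Finset.sum_sub_distrib, sumE]
  ext γ
  simp only [spanPos, Finset.mem_filter, Finset.mem_image, Finset.mem_univ, true_and]
  constructor
  · rintro ⟨hpos, c, hc⟩
    have hγlast : γ last = 0 := by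
      have h := congrFun hc last
      rw [Finset.sum_apply] at h
      rw [h]
      refine Finset.sum_eq_zero fun θ hθ' => ?_
      simp only [Finset.mem_image, Finset.mem_filter] at hθ'
      obtain ⟨m, ⟨_, hm⟩, rfl⟩ := hθ'
      simp [Pi.smul_apply, (hθ m hm).1]
    have hγsum : ∑ t, γ t = 0 := by
      rw [hc]
      simp only [Finset.sum_apply, Pi.smul_apply, smul_eq_mul]
      rw [Finset.sum_comm]
      refine Finset.sum_eq_zero fun θ hθ' => ?_
      simp only [Finset.mem_image, Finset.mem_filter] at hθ'
      obtain ⟨m, ⟨_, hm⟩, rfl⟩ := hθ'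
      rw [← Finset.mul_sum, (hθ m hm).2, mul_zero]
    simp only [posD, Finset.mem_union, Finset.mem_image, Finset.mem_filter,
      Finset.mem_univ, true_and] at hpos
    rcases hpos with ⟨p, hp, rfl⟩ | ⟨p, hp, rfl⟩
    · refine ⟨p, ⟨hp, ?_⟩, rfl⟩
      by_contra hcon
      have hp2 : p.2 = last := by
        apply Fin.ext
        have := p.2.isLt
        simp only [hlastdef]
        omega
      have hne : last ≠ p.1 := by
        rw [← hp2]
        exact (hp.ne).symm
      rw [Pi.sub_apply, hp2] at hγlast
      simp [E, hne] at hγlast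
    · exfalso
      simp only [Pi.add_apply, Finset.sum_add_distrib, sumE] at hγsum
      norm_num at hγsum
  · rintro ⟨p, hp, rfl⟩
    obtain ⟨hp1, hp2⟩ := hp
    refine ⟨?_, ?_⟩
    · simp only [posD, Finset.mem_union, Finset.mem_image, Finset.mem_filter,
        Finset.mem_univ, true_and]
      exact Or.inl ⟨p, hp1, rfl⟩
    · refine ⟨fun v => if ∃ m : Fin ℓ, p.1 ≤ m ∧ m < p.2 ∧ v = simpleD ℓ m then 1 else 0, ?_⟩
      have hinj : ∀ x ∈ (univ : Finset (Fin ℓ)).filter (fun i => i.val + 3 ≤ ℓ),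
          ∀ y ∈ (univ : Finset (Fin ℓ)).filter (fun i => i.val + 3 ≤ ℓ),
          simpleD ℓ x = simpleD ℓ y → x = y := by
        intro x hx y hy hxy
        simp only [Finset.mem_filter, Finset.mem_univ, true_and] at hx hy
        have hx1 : x.val + 1 < ℓ := by omega
        have hy1 : y.val + 1 < ℓ := by omega
        rw [simpleD, dif_pos hx1, simpleD, dif_pos hy1] at hxy
        exact (Esub_inj (by simp [Fin.lt_def]) (by simp [Fin.lt_def]) hxy).1
      rw [Finset.sum_image hinj]
      have key : ∀ m ∈ (univ : Finset (Fin ℓ)).filter (fun i => i.val + 3 ≤ ℓ),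
          ((if ∃ m' : Fin ℓ, p.1 ≤ m' ∧ m' < p.2 ∧ simpleD ℓ m = simpleD ℓ m'
              then (1:ℤ) else 0 : ℤ) : ℚ) • simpleD ℓ m
          = if p.1.val ≤ m.val ∧ m.val < p.2.val then gE ℓ m.val - gE ℓ (m.val + 1)
            else 0 := by
        intro m hm
        simp only [Finset.mem_filter, Finset.mem_univ, true_and] at hm
        have hm1 : m.val + 1 < ℓ := by omega
        have hsim : simpleD ℓ m = gE ℓ m.val - gE ℓ (m.val + 1) := by
          rw [simpleD, dif_pos hm1, gE, dif_pos (Nat.lt_of_succ_lt hm1), gE, dif_pos hm1,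
            Fin.eta]
        have hcond : (∃ m' : Fin ℓ, p.1 ≤ m' ∧ m' < p.2 ∧ simpleD ℓ m = simpleD ℓ m')
            ↔ (p.1.val ≤ m.val ∧ m.val < p.2.val) := by
          constructor
          · rintro ⟨m', h1, h2, h3⟩
            have hm'1 : m'.val + 1 < ℓ := by
              have := h2
              rw [Fin.lt_def] at this
              omega
            rw [simpleD, dif_pos hm1, simpleD, dif_pos hm'1] at h3
            have := (Esub_inj (show m < (⟨m.val + 1, hm1⟩ : Fin ℓ) by simp [Fin.lt_def])
              (show m' < (⟨m'.val + 1, hm'1⟩ : Fin ℓ) by simp [Fin.lt_def]) h3).1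
            subst this
            exact ⟨h1, h2⟩
          · rintro ⟨h1, h2⟩
            exact ⟨m, h1, h2, rfl⟩
        simp only [apply_ite (fun z : ℤ => (z : ℚ)), Int.cast_one, Int.cast_zero,
          ite_smul, one_smul, zero_smul]
        rw [if_congr hcond rfl rfl, hsim]
      rw [Finset.sum_congr rfl key]
      rw [sum_step ℓ p.1.val p.2.val hp1 hp2]
      rw [gE, dif_pos p.1.isLt, gE, dif_pos p.2.isLt, Fin.eta, Fin.eta]

lemma sum_if_val (ℓ : ℕ) (q : Fin ℓ → Prop) [DecidablePred q] (P : ℕ → Prop) [DecidablePred P]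
    (h : ∀ j : Fin ℓ, q j ↔ P j.val) :
    (∑ j : Fin ℓ, if q j then (1:ℚ) else 0) = ((range ℓ).filter P).card := by
  rw [Finset.sum_congr rfl fun j _ => if_congr (h j) rfl rfl, sum_ind]

lemma deltaP_apply9 (ℓ : ℕ) (hl : 4 ≤ ℓ) (c : Fin ℓ) :
    deltaP (posD ℓ) (((univ : Finset (Fin ℓ)).filter fun i => i.val + 3 ≤ ℓ).image (simpleD ℓ)) c
    = 2 * (∑ j : Fin ℓ, if c < j then (1:ℚ) else 0)
      - ((∑ j : Fin ℓ, if c < j ∧ j.val + 1 < ℓ then (1:ℚ) else 0)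
        - (∑ i : Fin ℓ, if i < c ∧ c.val + 1 < ℓ then (1:ℚ) else 0)) := by
  have hsub : spanPos (posD ℓ)
      (((univ : Finset (Fin ℓ)).filter fun i => i.val + 3 ≤ ℓ).image (simpleD ℓ)) ⊆ posD ℓ :=
    Finset.filter_subset _ _
  rw [deltaP, Finset.sum_sdiff_eq_sub hsub, Pi.sub_apply, span_eq ℓ hl, Spos_apply,
    SQ_apply]

lemma deltaP_a9 (ℓ : ℕ) (hl : 4 ≤ ℓ) (ha : ℓ - 2 < ℓ) :
    deltaP (posD ℓ)
      (((univ : Finset (Fin ℓ)).filter fun i => i.val + 3 ≤ ℓ).image (simpleD ℓ)) ⟨ℓ - 2, ha⟩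
    = (ℓ : ℚ) := by
  rw [deltaP_apply9 ℓ hl]
  rw [sum_if_val ℓ _ (fun n => ℓ - 2 < n) (fun j => by rw [Fin.lt_def])]
  rw [sum_if_val ℓ _ (fun n => ℓ - 2 < n ∧ n + 1 < ℓ) (fun j => by rw [Fin.lt_def])]
  rw [sum_if_val ℓ _ (fun n => n < ℓ - 2 ∧ (ℓ - 2) + 1 < ℓ) (fun j => by rw [Fin.lt_def])]
  have e1 : (range ℓ).filter (fun n => ℓ - 2 < n) = {ℓ - 1} := by
    ext n; simp only [Finset.mem_filter, Finset.mem_range, Finset.mem_singleton]; omega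
  have e2 : (range ℓ).filter (fun n => ℓ - 2 < n ∧ n + 1 < ℓ) = ∅ := by
    ext n; simp only [Finset.mem_filter, Finset.mem_range, Finset.notMem_empty, iff_false]
    omega
  have e3 : (range ℓ).filter (fun n => n < ℓ - 2 ∧ (ℓ - 2) + 1 < ℓ) = range (ℓ - 2) := by
    ext n; simp only [Finset.mem_filter, Finset.mem_range]; omega
  rw [e1, e2, e3]
  simp only [Finset.card_singleton, Finset.card_empty, Finset.card_range]
  have : ((ℓ - 2 : ℕ) : ℚ) = (ℓ : ℚ) - 2 := by
    have : (2:ℕ) ≤ ℓ := by omega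
    push_cast [Nat.cast_sub this]
    ring
  rw [this]
  push_cast
  ring

lemma deltaP_b9 (ℓ : ℕ) (hl : 4 ≤ ℓ) (hb : ℓ - 1 < ℓ) :
    deltaP (posD ℓ)
      (((univ : Finset (Fin ℓ)).filter fun i => i.val + 3 ≤ ℓ).image (simpleD ℓ)) ⟨ℓ - 1, hb⟩
    = 0 := by
  rw [deltaP_apply9 ℓ hl]
  rw [sum_if_val ℓ _ (fun n => ℓ - 1 < n) (fun j => by rw [Fin.lt_def])]
  rw [sum_if_val ℓ _ (fun n => ℓ - 1 < n ∧ n + 1 < ℓ) (fun j => by rw [Fin.lt_def])]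
  rw [sum_if_val ℓ _ (fun n => n < ℓ - 1 ∧ (ℓ - 1) + 1 < ℓ) (fun j => by rw [Fin.lt_def])]
  have e1 : (range ℓ).filter (fun n => ℓ - 1 < n) = ∅ := by
    ext n; simp only [Finset.mem_filter, Finset.mem_range, Finset.notMem_empty, iff_false]
    omega
  have e2 : (range ℓ).filter (fun n => ℓ - 1 < n ∧ n + 1 < ℓ) = ∅ := by
    ext n; simp only [Finset.mem_filter, Finset.mem_range, Finset.notMem_empty, iff_false]
    omega
  have e3 : (range ℓ).filter (fun n => n < ℓ - 1 ∧ (ℓ - 1) + 1 < ℓ) = ∅ := by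
    ext n; simp only [Finset.mem_filter, Finset.mem_range, Finset.notMem_empty, iff_false]
    omega
  rw [e1, e2, e3]
  simp

/-- Koszul numbers for `SO(2ℓ)/U(1)×U(ℓ-1)` with the two fork roots removed: in type `D_ℓ`
(`ℓ ≥ 4`) with `Θ = Σ \ {α_{ℓ-1}, α_ℓ}`, one has
`⟨δ_P, h_{α_{ℓ-1}}^∨⟩ = ℓ` and `⟨δ_P, h_{α_ℓ}^∨⟩ = ℓ`. -/
theorem stmt9 (ℓ : ℕ) (hl : 4 ≤ ℓ)
    (Θ : Finset (Fin ℓ → ℚ))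
    (hΘ : Θ = ((univ : Finset (Fin ℓ)).filter fun i =>
        i.val + 3 ≤ ℓ).image (simpleD ℓ)) :
    pairing (deltaP (posD ℓ) Θ) (simpleD ℓ ⟨ℓ - 2, by omega⟩) = (ℓ : ℚ) ∧
    pairing (deltaP (posD ℓ) Θ) (simpleD ℓ ⟨ℓ - 1, by omega⟩) = (ℓ : ℚ) := by
  subst hΘ
  have ha : ℓ - 2 < ℓ := by omega
  have hb : ℓ - 1 < ℓ := by omega
  have hab : (⟨ℓ - 2, ha⟩ : Fin ℓ) ≠ ⟨ℓ - 1, hb⟩ := by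
    simp only [Fin.ne_iff_vne]; omega
  set δ := deltaP (posD ℓ)
    (((univ : Finset (Fin ℓ)).filter fun i => i.val + 3 ≤ ℓ).image (simpleD ℓ)) with hδ
  have hda : δ ⟨ℓ - 2, ha⟩ = (ℓ : ℚ) := deltaP_a9 ℓ hl ha
  have hdb : δ ⟨ℓ - 1, hb⟩ = 0 := deltaP_b9 ℓ hl hb
  have hs1 : simpleD ℓ (⟨ℓ - 2, ha⟩ : Fin ℓ) = E ℓ ⟨ℓ - 2, ha⟩ - E ℓ ⟨ℓ - 1, hb⟩ := by
    have h1 : (ℓ - 2) + 1 < ℓ := by omega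
    rw [simpleD, dif_pos h1]
    congr 1
    exact congrArg (E ℓ) (Fin.ext (show ℓ - 2 + 1 = ℓ - 1 by omega))
  have hs2 : simpleD ℓ (⟨ℓ - 1, hb⟩ : Fin ℓ) = E ℓ ⟨ℓ - 2, ha⟩ + E ℓ ⟨ℓ - 1, hb⟩ := by
    have h1 : ¬ ((ℓ - 1) + 1 < ℓ) := by omega
    rw [simpleD, dif_neg h1]
  have hEaa : E ℓ (⟨ℓ - 2, ha⟩ : Fin ℓ) ⟨ℓ - 2, ha⟩ = 1 := by simp [E]
  have hEab : E ℓ (⟨ℓ - 2, ha⟩ : Fin ℓ) ⟨ℓ - 1, hb⟩ = 0 := by simp [E, hab.symm]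
  have hEba : E ℓ (⟨ℓ - 1, hb⟩ : Fin ℓ) ⟨ℓ - 2, ha⟩ = 0 := by simp [E, hab]
  have hEbb : E ℓ (⟨ℓ - 1, hb⟩ : Fin ℓ) ⟨ℓ - 1, hb⟩ = 1 := by simp [E]
  constructor
  · rw [show (⟨ℓ - 2, by omega⟩ : Fin ℓ) = ⟨ℓ - 2, ha⟩ from rfl, hs1, pairing]
    simp only [dot_sub_right, dot_E_right, Pi.sub_apply, hEaa, hEab, hEba, hEbb, hda, hdb]
    norm_num
  · rw [show (⟨ℓ - 1, by omega⟩ : Fin ℓ) = ⟨ℓ - 1, hb⟩ from rfl, hs2, pairing]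
    simp only [dot_add_right, dot_E_right, Pi.add_apply, hEaa, hEab, hEba, hEbb, hda, hdb]
    norm_num
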